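/- There exists a first-order formula λ(x, y, z) with three free variables over the language L₂ such that for every dimension n ≥ 1 and all total instances e₁, e₂, e₃ of dimension n, B_n ⊨ λ(e₁, e₂, e₃) if and only if d_H(e₁, e₂) ≤ d_H(e₁, e₃), where d_H denotes Hamming distance. -/
import Mathlib

open FirstOrder FirstOrder.Language

abbrev PI (n : ℕ) : Type := Fin n → Option Bool

def Subs {n : ℕ} (e e' : PI n) : Prop := ∀ i, e i ≠ none → e' i = e i

noncomputable def undefCard {n : ℕ} (e : PI n) : ℕ := Set.ncard {i | e i = none}

def Lel {n : ℕ} (e e' : PI n) : Prop := undefCard e' ≤ undefCard e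

def l2Lang : Language where
  Functions _ := Empty
  Relations n := match n with
    | 2 => Bool
    | _ => Empty

instance l2Struct (n : ℕ) : l2Lang.Structure (PI n) where
  funMap := fun {_} f => f.elim
  RelMap := fun {k} r v => match k, r with
    | 2, false => Subs (v 0) (v 1)
    | 2, true => Lel (v 0) (v 1)

def TotalPI {n : ℕ} (e : PI n) : Prop := ∀ i, e i ≠ none

noncomputable def hammingD {n : ℕ} (e e' : PI n) : ℕ := Set.ncard {i | e i ≠ e' i}

-- auxiliary definitions
def rel2 (b : Bool) {m : ℕ} (t₁ t₂ : l2Lang.Term (Fin 3 ⊕ Fin m)) :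
    l2Lang.BoundedFormula (Fin 3) m :=
  Relations.boundedFormula₂ (show l2Lang.Relations 2 from b) t₁ t₂

def xT {m : ℕ} : l2Lang.Term (Fin 3 ⊕ Fin m) := Term.var (Sum.inl 0)
def yT {m : ℕ} : l2Lang.Term (Fin 3 ⊕ Fin m) := Term.var (Sum.inl 1)
def zT {m : ℕ} : l2Lang.Term (Fin 3 ⊕ Fin m) := Term.var (Sum.inl 2)
def vT {m : ℕ} (k : Fin m) : l2Lang.Term (Fin 3 ⊕ Fin m) := Term.var (Sum.inr k)

def lamF : l2Lang.Formula (Fin 3) :=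
  BoundedFormula.ex
    ((rel2 false (vT 0) xT ⊓ rel2 false (vT 0) yT) ⊓
      BoundedFormula.all
        ((rel2 false (vT 1) xT ⊓ rel2 false (vT 1) zT) ⟹ rel2 true (vT 1) (vT 0)))

-- the meet of two total instances
def meetPI {n : ℕ} (e e' : PI n) : PI n := fun i => if e i = e' i then e i else none

lemma meet_subs_left {n : ℕ} (e e' : PI n) : Subs (meetPI e e') e := by
  intro i h
  simp only [meetPI] at h ⊢
  by_cases hc : e i = e' i <;> simp [hc] at h ⊢

lemma meet_subs_right {n : ℕ} (e e' : PI n) : Subs (meetPI e e') e' := by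
  intro i h
  simp only [meetPI] at h ⊢
  by_cases hc : e i = e' i <;> simp [hc] at h ⊢

lemma meet_undef {n : ℕ} (e e' : PI n) (he : TotalPI e) :
    undefCard (meetPI e e') = hammingD e e' := by
  unfold undefCard hammingD
  congr 1
  ext i
  simp only [Set.mem_setOf_eq, meetPI]
  by_cases hc : e i = e' i
  · simp [hc, he i]
    exact hc ▸ he i
  · simp [hc]

lemma hamming_le_undef {n : ℕ} {w e e' : PI n} (h1 : Subs w e) (h2 : Subs w e') :
    hammingD e e' ≤ undefCard w := by
  apply Set.ncard_le_ncard _ (Set.toFinite _)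
  intro i hi
  simp only [Set.mem_setOf_eq] at hi ⊢
  by_contra hw
  exact hi ((h1 i hw).trans (h2 i hw).symm)

theorem stmt11 :
    ∃ lam : l2Lang.Formula (Fin 3),
      ∀ (n : ℕ), 1 ≤ n → ∀ (e₁ e₂ e₃ : PI n), TotalPI e₁ → TotalPI e₂ → TotalPI e₃ →
        (lam.Realize ![e₁, e₂, e₃] ↔ hammingD e₁ e₂ ≤ hammingD e₁ e₃) := by
  refine ⟨lamF, fun n hn e₁ e₂ e₃ h₁ h₂ h₃ => ?_⟩
  have : lamF.Realize ![e₁, e₂, e₃] ↔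
      ∃ v : PI n, (Subs v e₁ ∧ Subs v e₂) ∧
        ∀ w : PI n, Subs w e₁ ∧ Subs w e₃ → undefCard v ≤ undefCard w := by
    simp only [lamF, Formula.Realize, BoundedFormula.realize_ex, BoundedFormula.realize_inf,
      BoundedFormula.realize_all, BoundedFormula.realize_imp, rel2,
      BoundedFormula.realize_rel₂, xT, yT, zT, vT, Term.realize_var, Sum.elim_inl, Sum.elim_inr]
    rfl
  rw [this]
  constructor
  · rintro ⟨v, ⟨hv1, hv2⟩, hmin⟩
    calc hammingD e₁ e₂ ≤ undefCard v := hamming_le_undef hv1 hv2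
    _ ≤ undefCard (meetPI e₁ e₃) := hmin _ ⟨meet_subs_left _ _, meet_subs_right _ _⟩
    _ = hammingD e₁ e₃ := meet_undef _ _ h₁
  · intro hle
    refine ⟨meetPI e₁ e₂, ⟨meet_subs_left _ _, meet_subs_right _ _⟩, fun w ⟨hw1, hw3⟩ => ?_⟩
    rw [meet_undef _ _ h₁]
    exact hle.trans (hamming_le_undef hw1 hw3)
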